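/- Let k1, k2 be integers with 0 ≤ k1 ≤ k2 and p ≡ 1 (mod k1+k2) a prime with p > k1+k2. Then there exists a nonsingular perfect B[-k1,k2](p) splitter set if and only if the set M = [-k1,k2]* (viewed in Z_p*) is a direct factor of the subgroup H = ⟨-1, 2, ..., k2⟩ of Z_p*, i.e., there exists B' ⊆ H such that every element of H is uniquely expressible as m·b' with m ∈ M and b' ∈ B'. -/

import Mathlib

/-- `b·[-k1,k2]* = {b·j mod q : -k1 ≤ j ≤ k2, j ≠ 0}` as a finset of `ZMod q`. -/
noncomputable def bStar (k1 k2 q : ℕ) (b : ZMod q) : Finset (ZMod q) :=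
  ((Finset.Icc (-(k1 : ℤ)) (k2 : ℤ)).erase 0).image (fun j : ℤ => b * (j : ZMod q))



open Finset

section aux
variable {k1 k2 p : ℕ}

lemma SP.castInjOn (hlt : k1 + k2 < p) :
    Set.InjOn (fun j : ℤ => (j : ZMod p)) (Finset.Icc (-(k1 : ℤ)) (k2 : ℤ)) := by
  intro a ha b hb hab
  simp only [Finset.coe_Icc, Set.mem_Icc] at ha hb
  have : (p : ℤ) ∣ a - b := by
    rwa [← ZMod.intCast_zmod_eq_zero_iff_dvd, Int.cast_sub, sub_eq_zero]
  have habs : |a - b| < (p : ℤ) := by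
    rw [abs_sub_lt_iff]
    constructor <;> push_cast <;> omega
  have := Int.eq_zero_of_abs_lt_dvd this habs
  omega

lemma SP.mem_bStar {b x : ZMod p} :
    x ∈ bStar k1 k2 p b ↔ ∃ j : ℤ, j ≠ 0 ∧ -(k1:ℤ) ≤ j ∧ j ≤ k2 ∧ x = b * (j : ZMod p) := by
  simp only [bStar, Finset.mem_image, Finset.mem_erase, Finset.mem_Icc]
  constructor
  · rintro ⟨j, ⟨hj0, hj1, hj2⟩, rfl⟩; exact ⟨j, hj0, hj1, hj2, rfl⟩
  · rintro ⟨j, hj0, hj1, hj2, rfl⟩; exact ⟨j, ⟨hj0, hj1, hj2⟩, rfl⟩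

lemma SP.card_Jset : ((Finset.Icc (-(k1 : ℤ)) (k2 : ℤ)).erase 0).card = k1 + k2 := by
  rw [Finset.card_erase_of_mem (by simp), Int.card_Icc]
  simp; omega

lemma SP.cast_ne_zero (hlt : k1 + k2 < p) {j : ℤ} (hj0 : j ≠ 0)
    (hj1 : -(k1:ℤ) ≤ j) (hj2 : j ≤ k2) : (j : ZMod p) ≠ 0 := by
  intro h
  have := SP.castInjOn (k1 := k1) (k2 := k2) hlt (x₁ := j) (x₂ := 0)
    (by simp only [Finset.coe_Icc, Set.mem_Icc]; omega)
    (by simp only [Finset.coe_Icc, Set.mem_Icc]; omega) (by simpa using h)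
  exact hj0 this

lemma SP.card_bStar (hp : p.Prime) (hlt : k1 + k2 < p) {b : ZMod p} (hb : b ≠ 0) :
    (bStar k1 k2 p b).card = k1 + k2 := by
  haveI := Fact.mk hp
  rw [bStar, Finset.card_image_of_injOn, SP.card_Jset]
  intro a ha b' hb' hab
  have := mul_left_cancel₀ hb hab
  exact SP.castInjOn hlt (Finset.mem_of_mem_erase ha) (Finset.mem_of_mem_erase hb') this

lemma SP.zero_not_mem_bStar (hp : p.Prime) (hlt : k1 + k2 < p) {b : ZMod p} (hb : b ≠ 0) :
    (0 : ZMod p) ∉ bStar k1 k2 p b := by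
  haveI := Fact.mk hp
  rw [SP.mem_bStar]
  rintro ⟨j, hj0, hj1, hj2, hj⟩
  exact SP.cast_ne_zero hlt hj0 hj1 hj2 (by
    rcases mul_eq_zero.mp hj.symm with h | h
    · exact absurd h hb
    · exact h)

end aux
open Finset

section auxH
variable {k1 k2 p : ℕ}

/-- The subgroup-as-submonoid `H = ⟨-1, 2, ..., k2⟩`. -/
def SPH (k2 p : ℕ) : Submonoid (ZMod p) :=
  Submonoid.closure ({-1} ∪ (fun j : ℕ => (j : ZMod p)) '' Set.Icc 2 k2)

lemma SPH.ne_zero (hp : p.Prime) (hk2 : k2 < p) {x : ZMod p} (hx : x ∈ SPH k2 p) :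
    x ≠ 0 := by
  haveI := Fact.mk hp
  induction hx using Submonoid.closure_induction with
  | mem y hy =>
    rcases hy with h | ⟨j, ⟨hj2, hjk⟩, rfl⟩
    · rw [Set.mem_singleton_iff] at h; subst h
      simp [neg_eq_zero]
    · simp only [ne_eq, ZMod.natCast_eq_zero_iff]
      intro hdvd
      have := Nat.le_of_dvd (by omega) hdvd
      omega
  | one => exact one_ne_zero
  | mul a b _ _ ha hb => exact mul_ne_zero ha hb

lemma SPH.inv_mem (hp : p.Prime) (hk2 : k2 < p) {x : ZMod p} (hx : x ∈ SPH k2 p) :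
    ∃ y ∈ SPH k2 p, x * y = 1 := by
  haveI := Fact.mk hp
  refine ⟨x ^ (p - 2), pow_mem hx _, ?_⟩
  have hx0 : x ≠ 0 := SPH.ne_zero hp hk2 hx
  have h1 : x * x ^ (p - 2) = x ^ (p - 1) := by
    rw [← pow_succ']
    congr 1
    have := hp.two_le
    omega
  rw [h1, ZMod.pow_card_sub_one_eq_one hx0]

lemma SPH.natCast_mem (hk2 : 1 ≤ k2) {j : ℕ} (hj1 : 1 ≤ j) (hj2 : j ≤ k2) :
    ((j : ZMod p)) ∈ SPH k2 p := by
  rcases Nat.lt_or_ge j 2 with h | h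
  · interval_cases j
    · simpa using one_mem _
  · exact Submonoid.subset_closure (Or.inr ⟨j, ⟨h, hj2⟩, rfl⟩)

lemma SPH.intCast_mem (hk : k1 ≤ k2) (hk2 : 1 ≤ k2) {j : ℤ} (hj0 : j ≠ 0)
    (hj1 : -(k1:ℤ) ≤ j) (hj2 : j ≤ k2) : ((j : ZMod p)) ∈ SPH k2 p := by
  rcases lt_or_gt_of_ne hj0 with h | h
  · have hneg : (-1 : ZMod p) ∈ SPH k2 p :=
      Submonoid.subset_closure (Or.inl rfl)
    have hm : (((-j).toNat : ZMod p)) ∈ SPH k2 p := by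
      apply SPH.natCast_mem hk2 <;> omega
    have : (j : ZMod p) = (-1) * (((-j).toNat : ℕ) : ZMod p) := by
      have h2 : ((-j).toNat : ℤ) = -j := Int.toNat_of_nonneg (by omega)
      rw [neg_one_mul, ← Int.cast_natCast, h2, Int.cast_neg, neg_neg]
    rw [this]
    exact mul_mem hneg hm
  · have : (j : ZMod p) = ((j.toNat : ℕ) : ZMod p) := by
      rw [← Int.cast_natCast, Int.toNat_of_nonneg (by omega)]
    rw [this]
    apply SPH.natCast_mem hk2 <;> omega

end auxH

section auxU
variable {k1 k2 p : ℕ}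

/-- The corresponding subgroup of units. -/
def SPHU (k2 p : ℕ) (hp : p.Prime) (hk2 : k2 < p) : Subgroup (ZMod p)ˣ where
  carrier := {u | (↑u : ZMod p) ∈ SPH k2 p}
  mul_mem' := by
    intro a b ha hb
    simp only [Set.mem_setOf_eq, Units.val_mul] at *
    exact mul_mem ha hb
  one_mem' := by
    simp only [Set.mem_setOf_eq, Units.val_one]
    exact one_mem _
  inv_mem' := by
    intro u hu
    simp only [Set.mem_setOf_eq] at *
    obtain ⟨y, hy, hxy⟩ := SPH.inv_mem hp hk2 hu
    have huy : (↑u⁻¹ : ZMod p) = y := by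
      calc (↑u⁻¹ : ZMod p) = ↑u⁻¹ * (↑u * y) := by rw [hxy, mul_one]
        _ = (↑u⁻¹ * ↑u : ZMod p) * y := by ring
        _ = y := by rw [← Units.val_mul, inv_mul_cancel, Units.val_one, one_mul]
    rw [huy]; exact hy

lemma SPHU.mem_iff (hp : p.Prime) (hk2 : k2 < p) {u : (ZMod p)ˣ} :
    u ∈ SPHU k2 p hp hk2 ↔ (↑u : ZMod p) ∈ SPH k2 p := Iff.rfl

lemma SP.M_sub_H (hk : k1 ≤ k2) (hk2 : 1 ≤ k2) {x : ZMod p}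
    (hx : x ∈ bStar k1 k2 p 1) : x ∈ SPH k2 p := by
  obtain ⟨j, hj0, hj1, hj2, rfl⟩ := SP.mem_bStar.mp hx
  rw [one_mul]
  exact SPH.intCast_mem hk hk2 hj0 hj1 hj2

lemma SP.key (hp : p.Prime) (hk : k1 ≤ k2) (hk2 : 1 ≤ k2) (hk2p : k2 < p) (hlt : k1 + k2 < p)
    {B' : Finset (ZMod p)} (hB'H : ∀ b ∈ B', b ∈ SPH k2 p)
    (hfact : ∀ h ∈ SPH k2 p, ∃! q : ZMod p × ZMod p,
      q.1 ∈ bStar k1 k2 p 1 ∧ q.2 ∈ B' ∧ q.1 * q.2 = h)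
    (t₁ t₂ : (ZMod p)ˣ ⧸ SPHU k2 p hp hk2p) {m₁ m₂ b₁ b₂ : ZMod p}
    (hm₁ : m₁ ∈ bStar k1 k2 p 1) (hm₂ : m₂ ∈ bStar k1 k2 p 1)
    (hb₁ : b₁ ∈ B') (hb₂ : b₂ ∈ B')
    (heq : m₁ * (↑t₁.out : ZMod p) * b₁ = m₂ * (↑t₂.out : ZMod p) * b₂) :
    t₁ = t₂ ∧ m₁ = m₂ ∧ b₁ = b₂ := by
  haveI := Fact.mk hp
  have h₁ : m₁ * b₁ ∈ SPH k2 p := mul_mem (SP.M_sub_H hk hk2 hm₁) (hB'H _ hb₁)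
  have h₂ : m₂ * b₂ ∈ SPH k2 p := mul_mem (SP.M_sub_H hk hk2 hm₂) (hB'H _ hb₂)
  set u₁ := (isUnit_iff_ne_zero.mpr (SPH.ne_zero hp hk2p h₁)).unit with hu₁def
  set u₂ := (isUnit_iff_ne_zero.mpr (SPH.ne_zero hp hk2p h₂)).unit with hu₂def
  have hu₁v : (↑u₁ : ZMod p) = m₁ * b₁ := IsUnit.unit_spec _
  have hu₂v : (↑u₂ : ZMod p) = m₂ * b₂ := IsUnit.unit_spec _
  have hu : t₁.out * u₁ = t₂.out * u₂ := by
    apply Units.ext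
    rw [Units.val_mul, Units.val_mul, hu₁v, hu₂v]
    linear_combination heq
  have hmem₁ : u₁ ∈ SPHU k2 p hp hk2p := by rw [SPHU.mem_iff, hu₁v]; exact h₁
  have hmem₂ : u₂ ∈ SPHU k2 p hp hk2p := by rw [SPHU.mem_iff, hu₂v]; exact h₂
  have ht : t₁ = t₂ := by
    have e1 : (QuotientGroup.mk t₁.out : _ ⧸ SPHU k2 p hp hk2p) = QuotientGroup.mk t₂.out := by
      rw [QuotientGroup.eq]
      have e2 : t₁.out⁻¹ * t₂.out = u₁ * u₂⁻¹ := by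
        have e3 : t₂.out = t₁.out * (u₁ * u₂⁻¹) := by
          rw [← mul_assoc, hu, mul_assoc, mul_inv_cancel, mul_one]
        rw [e3, ← mul_assoc, inv_mul_cancel, one_mul]
      rw [e2]
      exact mul_mem hmem₁ (inv_mem hmem₂)
    rwa [QuotientGroup.out_eq', QuotientGroup.out_eq'] at e1
  have hT0 : (↑t₁.out : ZMod p) ≠ 0 := Units.ne_zero _
  have hmb : m₁ * b₁ = m₂ * b₂ := by
    apply mul_left_cancel₀ hT0
    rw [← ht] at heq
    linear_combination heq
  obtain ⟨q, hq, huniq⟩ := hfact (m₁ * b₁) h₁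
  have e₁ := huniq (m₁, b₁) ⟨hm₁, hb₁, rfl⟩
  have e₂ := huniq (m₂, b₂) ⟨hm₂, hb₂, hmb.symm⟩
  have e3 : (m₁, b₁) = (m₂, b₂) := e₁.trans e₂.symm
  exact ⟨ht, congrArg Prod.fst e3, congrArg Prod.snd e3⟩

end auxU

/-- `B` is a `B[-k1,k2](q)` splitter set. -/
def IsSplitter (k1 k2 q : ℕ) (B : Finset (ZMod q)) : Prop :=
  (∀ b ∈ B, (bStar k1 k2 q b).card = k1 + k2) ∧
  ((B : Set (ZMod q)).Pairwise fun b b' => Disjoint (bStar k1 k2 q b) (bStar k1 k2 q b'))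

/-- `B` is a perfect splitter set: `|B| = (q-1)/(k1+k2)` with exact division. -/
def IsPerfectSplitter (k1 k2 q : ℕ) (B : Finset (ZMod q)) : Prop :=
  IsSplitter k1 k2 q B ∧ (k1 + k2) * B.card = q - 1

set_option maxHeartbeats 1000000 in
theorem stmt_2 (k1 k2 p : ℕ) (hk : k1 ≤ k2) (hp : p.Prime)
    (hmod : p % (k1 + k2) = 1) (hlt : k1 + k2 < p) :
    (∃ B : Finset (ZMod p), IsPerfectSplitter k1 k2 p B ∧
        Nat.Coprime p (Nat.factorial k2)) ↔
      (∃ B' : Finset (ZMod p),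
        (∀ b ∈ B', b ∈ Submonoid.closure
            ({-1} ∪ (fun j : ℕ => (j : ZMod p)) '' Set.Icc 2 k2)) ∧
        ∀ h ∈ Submonoid.closure
            ({-1} ∪ (fun j : ℕ => (j : ZMod p)) '' Set.Icc 2 k2),
          ∃! q : ZMod p × ZMod p,
            q.1 ∈ bStar k1 k2 p 1 ∧ q.2 ∈ B' ∧ q.1 * q.2 = h) := by
  classical
  haveI := Fact.mk hp
  haveI : NeZero p := ⟨hp.pos.ne'⟩
  have hn2 : 2 ≤ k1 + k2 := by
    by_contra hcon
    push_neg at hcon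
    have hcas : k1 + k2 = 0 ∨ k1 + k2 = 1 := by omega
    rcases hcas with h | h <;> rw [h] at hmod
    · rw [Nat.mod_zero] at hmod
      exact absurd hmod hp.one_lt.ne'
    · omega
  have hk2 : 1 ≤ k2 := by omega
  have hk2p : k2 < p := by omega
  have hMH : ∀ x ∈ bStar k1 k2 p 1, x ∈ SPH k2 p := fun x hx => SP.M_sub_H hk hk2 hx
  constructor
  · -- splitter → factorization
    rintro ⟨B, ⟨⟨hcardB, hdisj⟩, hperf⟩, -⟩
    have hB0 : ∀ b ∈ B, b ≠ 0 := by
      rintro b hb rfl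
      have h1 := hcardB 0 hb
      have h2 : bStar k1 k2 p 0 ⊆ {0} := by
        intro x hx
        obtain ⟨j, _, _, _, rfl⟩ := SP.mem_bStar.mp hx
        simp
      have := Finset.card_le_card h2
      simp [h1] at this
      omega
    have hcover : ∀ x : ZMod p, x ≠ 0 → ∃ b ∈ B, x ∈ bStar k1 k2 p b := by
      have hdisj' : ∀ x ∈ B, ∀ y ∈ B, x ≠ y →
          Disjoint (bStar k1 k2 p x) (bStar k1 k2 p y) := fun x hx y hy hxy => hdisj hx hy hxy
      have hUcard : (B.biUnion (bStar k1 k2 p)).card = p - 1 := by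
        rw [Finset.card_biUnion hdisj', Finset.sum_congr rfl (fun b hb => hcardB b hb),
          Finset.sum_const, smul_eq_mul, mul_comm]
        exact hperf
      have hUsub : B.biUnion (bStar k1 k2 p) ⊆ Finset.univ.erase 0 := by
        intro x hx
        rcases Finset.mem_biUnion.mp hx with ⟨b, hb, hxb⟩
        refine Finset.mem_erase.mpr ⟨?_, Finset.mem_univ _⟩
        rintro rfl
        exact SP.zero_not_mem_bStar hp hlt (hB0 b hb) hxb
      have hecard : (Finset.univ.erase (0 : ZMod p)).card = p - 1 := by
        rw [Finset.card_erase_of_mem (Finset.mem_univ _), Finset.card_univ, ZMod.card]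
      have hUeq : B.biUnion (bStar k1 k2 p) = Finset.univ.erase 0 :=
        Finset.eq_of_subset_of_card_le hUsub (by rw [hUcard, hecard])
      intro x hx
      have : x ∈ B.biUnion (bStar k1 k2 p) := by
        rw [hUeq]; exact Finset.mem_erase.mpr ⟨hx, Finset.mem_univ x⟩
      exact Finset.mem_biUnion.mp this
    refine ⟨B.filter (· ∈ SPH k2 p), fun b hb => (Finset.mem_filter.mp hb).2, ?_⟩
    intro h hh
    have hh0 : h ≠ 0 := SPH.ne_zero hp hk2p hh
    obtain ⟨b, hbB, hhb⟩ := hcover h hh0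
    obtain ⟨j, hj0, hj1, hj2, hje⟩ := SP.mem_bStar.mp hhb
    have hm : ((j : ZMod p)) ∈ bStar k1 k2 p 1 :=
      SP.mem_bStar.mpr ⟨j, hj0, hj1, hj2, (one_mul _).symm⟩
    have hmH : ((j : ZMod p)) ∈ SPH k2 p := SPH.intCast_mem hk hk2 hj0 hj1 hj2
    obtain ⟨m', hm'H, hmm'⟩ := SPH.inv_mem hp hk2p hmH
    have hbH : b ∈ SPH k2 p := by
      have hbh : b = h * m' := by
        calc b = b * ((j : ZMod p) * m') := by rw [hmm', mul_one]
          _ = h * m' := by rw [hje]; ring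
      rw [hbh]
      exact mul_mem hh hm'H
    refine ⟨((j : ZMod p), b), ⟨hm, Finset.mem_filter.mpr ⟨hbB, hbH⟩, by rw [hje]; ring⟩, ?_⟩
    rintro ⟨m₂, b₂⟩ ⟨hm₂, hb₂, hmb₂⟩
    simp only at hm₂ hb₂ hmb₂
    have hb₂B : b₂ ∈ B := (Finset.mem_filter.mp hb₂).1
    obtain ⟨j₂, hj₂0, hj₂1, hj₂2, hje₂⟩ := SP.mem_bStar.mp hm₂
    have hhb₂ : h ∈ bStar k1 k2 p b₂ :=
      SP.mem_bStar.mpr ⟨j₂, hj₂0, hj₂1, hj₂2, by rw [← hmb₂, hje₂]; ring⟩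
    have hbeq : b₂ = b := by
      by_contra hne
      exact (Finset.disjoint_left.mp (hdisj hb₂B hbB hne) hhb₂) hhb
    subst hbeq
    have hmeq : m₂ = (j : ZMod p) := by
      apply mul_right_cancel₀ (hB0 _ hb₂B)
      rw [hmb₂, hje]; ring
    rw [hmeq]
  · -- factorization → splitter
    rintro ⟨B', hB'H, hfact⟩
    haveI : Fintype ((ZMod p)ˣ ⧸ SPHU k2 p hp hk2p) := Fintype.ofFinite _
    set T : ((ZMod p)ˣ ⧸ SPHU k2 p hp hk2p) → (ZMod p)ˣ := Quotient.out with hT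
    set B : Finset (ZMod p) := (Finset.univ ×ˢ B').image
      (fun q : ((ZMod p)ˣ ⧸ SPHU k2 p hp hk2p) × ZMod p => ((T q.1 : (ZMod p)ˣ) : ZMod p) * q.2)
      with hBdef
    have hone : (1 : ZMod p) ∈ bStar k1 k2 p 1 :=
      SP.mem_bStar.mpr ⟨1, one_ne_zero, by omega, by exact_mod_cast hk2, by simp⟩
    have hB0 : ∀ b ∈ B, b ≠ 0 := by
      intro b hb
      obtain ⟨⟨t, c⟩, hm, rfl⟩ := Finset.mem_image.mp hb
      have hc : c ∈ B' := (Finset.mem_product.mp hm).2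
      exact mul_ne_zero (Units.ne_zero _) (SPH.ne_zero hp hk2p (hB'H _ hc))
    refine ⟨B, ⟨⟨fun b hb => SP.card_bStar hp hlt (hB0 b hb), ?_⟩, ?_⟩, ?_⟩
    · -- pairwise disjoint
      intro b₁ hb₁ b₂ hb₂ hne
      rw [Finset.disjoint_left]
      intro x hx₁ hx₂
      obtain ⟨⟨t₁, c₁⟩, hm₁, he₁⟩ := Finset.mem_image.mp (Finset.mem_coe.mp hb₁)
      obtain ⟨⟨t₂, c₂⟩, hm₂, he₂⟩ := Finset.mem_image.mp (Finset.mem_coe.mp hb₂)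
      have hc₁ : c₁ ∈ B' := (Finset.mem_product.mp hm₁).2
      have hc₂ : c₂ ∈ B' := (Finset.mem_product.mp hm₂).2
      obtain ⟨j₁, hj₁0, hj₁1, hj₁2, hje₁⟩ := SP.mem_bStar.mp hx₁
      obtain ⟨j₂, hj₂0, hj₂1, hj₂2, hje₂⟩ := SP.mem_bStar.mp hx₂
      have hmm₁ : ((j₁ : ZMod p)) ∈ bStar k1 k2 p 1 :=
        SP.mem_bStar.mpr ⟨j₁, hj₁0, hj₁1, hj₁2, (one_mul _).symm⟩
      have hmm₂ : ((j₂ : ZMod p)) ∈ bStar k1 k2 p 1 :=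
        SP.mem_bStar.mpr ⟨j₂, hj₂0, hj₂1, hj₂2, (one_mul _).symm⟩
      have heq : (j₁ : ZMod p) * (↑(t₁.out) : ZMod p) * c₁
          = (j₂ : ZMod p) * (↑(t₂.out) : ZMod p) * c₂ := by
        have e1 : x = (↑(t₁.out) : ZMod p) * c₁ * (j₁ : ZMod p) := by rw [← he₁] at hje₁; exact hje₁
        have e2 : x = (↑(t₂.out) : ZMod p) * c₂ * (j₂ : ZMod p) := by rw [← he₂] at hje₂; exact hje₂
        linear_combination e2 - e1
      obtain ⟨ht, -, hc⟩ := SP.key hp hk hk2 hk2p hlt hB'H hfact t₁ t₂ hmm₁ hmm₂ hc₁ hc₂ heq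
      exact hne (by rw [← he₁, ← he₂, ht, hc])
    · -- cardinality
      have hBcard : B.card = Fintype.card ((ZMod p)ˣ ⧸ SPHU k2 p hp hk2p) * B'.card := by
        rw [hBdef, Finset.card_image_of_injOn, Finset.card_product, Finset.card_univ]
        rintro ⟨t₁, c₁⟩ hm₁ ⟨t₂, c₂⟩ hm₂ he
        simp only [Finset.mem_coe, Finset.mem_product] at hm₁ hm₂
        have heq : (1 : ZMod p) * (↑(t₁.out) : ZMod p) * c₁
            = (1 : ZMod p) * (↑(t₂.out) : ZMod p) * c₂ := by
          simpa [one_mul] using he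
        obtain ⟨ht, -, hc⟩ := SP.key hp hk hk2 hk2p hlt hB'H hfact t₁ t₂ hone hone
          hm₁.2 hm₂.2 heq
        exact Prod.ext ht hc
      have hHcard : (k1 + k2) * B'.card = Nat.card (SPHU k2 p hp hk2p) := by
        have hHf : (Finset.univ.filter (· ∈ SPH k2 p) : Finset (ZMod p))
            = ((bStar k1 k2 p 1) ×ˢ B').image (fun q => q.1 * q.2) := by
          ext x
          simp only [Finset.mem_filter, Finset.mem_univ, true_and, Finset.mem_image,
            Finset.mem_product, Prod.exists]
          constructor
          · intro hx
            obtain ⟨⟨m, b⟩, ⟨hm, hb, hmb⟩, -⟩ := hfact x hx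
            exact ⟨m, b, ⟨hm, hb⟩, hmb⟩
          · rintro ⟨m, b, ⟨hm, hb⟩, rfl⟩
            exact mul_mem (hMH m hm) (hB'H b hb)
        have hinj : Set.InjOn (fun q : ZMod p × ZMod p => q.1 * q.2)
            (((bStar k1 k2 p 1) ×ˢ B' : Finset (ZMod p × ZMod p)) : Set (ZMod p × ZMod p)) := by
          rintro ⟨m₁, b₁⟩ hm₁ ⟨m₂, b₂⟩ hm₂ he
          rw [Finset.mem_coe, Finset.mem_product] at hm₁ hm₂
          simp only at he
          have h₁ : m₁ * b₁ ∈ SPH k2 p := mul_mem (hMH _ hm₁.1) (hB'H _ hm₁.2)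
          obtain ⟨q, hq, huniq⟩ := hfact (m₁ * b₁) h₁
          exact (huniq (m₁, b₁) ⟨hm₁.1, hm₁.2, rfl⟩).trans
            (huniq (m₂, b₂) ⟨hm₂.1, hm₂.2, he.symm⟩).symm
        have hcard1 : (Finset.univ.filter (· ∈ SPH k2 p) : Finset (ZMod p)).card
            = (k1 + k2) * B'.card := by
          rw [hHf, Finset.card_image_of_injOn hinj, Finset.card_product,
            SP.card_bStar hp hlt (one_ne_zero)]
        have hbij : (Finset.univ.filter (· ∈ SPH k2 p) : Finset (ZMod p))
            = Finset.image Units.val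
              (Finset.univ.filter (· ∈ SPHU k2 p hp hk2p) : Finset (ZMod p)ˣ) := by
          ext x
          constructor
          · intro hx
            have hx' : x ∈ SPH k2 p := (Finset.mem_filter.mp hx).2
            refine Finset.mem_image.mpr
              ⟨(isUnit_iff_ne_zero.mpr (SPH.ne_zero hp hk2p hx')).unit,
                Finset.mem_filter.mpr ⟨Finset.mem_univ _, ?_⟩, IsUnit.unit_spec _⟩
            rw [SPHU.mem_iff, IsUnit.unit_spec]
            exact hx'
          · intro hx
            obtain ⟨u, hu, rfl⟩ := Finset.mem_image.mp hx
            exact Finset.mem_filter.mpr ⟨Finset.mem_univ _, (Finset.mem_filter.mp hu).2⟩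
        have hcard2 : (Finset.univ.filter (· ∈ SPHU k2 p hp hk2p) : Finset (ZMod p)ˣ).card
            = Nat.card (SPHU k2 p hp hk2p) := by
          rw [Nat.card_eq_fintype_card, Fintype.card_subtype]
        rw [← hcard1, hbij, Finset.card_image_of_injOn (fun a _ b _ h => Units.ext h), hcard2]
      have hG : Nat.card (ZMod p)ˣ = p - 1 := by
        rw [Nat.card_eq_fintype_card, ZMod.card_units_eq_totient, Nat.totient_prime hp]
      have lag := Subgroup.card_eq_card_quotient_mul_card_subgroup (SPHU k2 p hp hk2p)
      rw [hG] at lag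
      rw [hBcard, ← mul_assoc, mul_comm (k1 + k2), mul_assoc, hHcard, lag]
      simp [Nat.card_eq_fintype_card]
    · rw [Nat.Prime.coprime_iff_not_dvd hp]
      intro hdvd
      have := (Nat.Prime.dvd_factorial hp).mp hdvd
      omega
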